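/- Let G° be a flow network with integer arc capacities and no vertex capacities, and let f be a (possibly fractional) feasible flow in G° whose value v(f) is an integer and such that the net flow out of every terminal is an integer on the boundary (value constraints only at source s and sink t). Then there exists an integer-valued feasible flow f₁ in G° with v(f₁) = v(f) and |f(e) - f₁(e)| < 1 for every arc e. -/

import Mathlib

open Finset

namespace StmtSix

/-- `x` is an integer real. -/
def II (x : ℝ) : Prop := ∃ z : ℤ, x = (z : ℝ)

lemma II_int (z : ℤ) : II (z : ℝ) := ⟨z, rfl⟩

lemma II.add {x y : ℝ} (hx : II x) (hy : II y) : II (x + y) := by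
  obtain ⟨a, rfl⟩ := hx; obtain ⟨b, rfl⟩ := hy; exact ⟨a + b, by push_cast; ring⟩

lemma II.sub {x y : ℝ} (hx : II x) (hy : II y) : II (x - y) := by
  obtain ⟨a, rfl⟩ := hx; obtain ⟨b, rfl⟩ := hy; exact ⟨a - b, by push_cast; ring⟩

lemma II.neg {x : ℝ} (hx : II x) : II (-x) := by
  obtain ⟨a, rfl⟩ := hx; exact ⟨-a, by push_cast; ring⟩

lemma II_zero : II 0 := ⟨0, by norm_num⟩

lemma II_sum {α : Type*} {s : Finset α} {f : α → ℝ} (h : ∀ i ∈ s, II (f i)) :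
    II (∑ i ∈ s, f i) := by
  classical
  induction s using Finset.induction_on with
  | empty => simpa using II_zero
  | insert _ _ hne ih =>
    rw [Finset.sum_insert hne]
    exact (h _ (Finset.mem_insert_self _ _)).add
      (ih fun i hi => h i (Finset.mem_insert_of_mem hi))

lemma II.floor_eq {x : ℝ} (hx : II x) : (⌊x⌋ : ℝ) = x := by
  obtain ⟨a, rfl⟩ := hx; simp

lemma II.ceil_eq {x : ℝ} (hx : II x) : (⌈x⌉ : ℝ) = x := by
  obtain ⟨a, rfl⟩ := hx; simp

lemma not_II_floor_lt {x : ℝ} (hx : ¬ II x) : (⌊x⌋ : ℝ) < x :=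
  lt_of_le_of_ne (Int.floor_le x) fun h => hx ⟨⌊x⌋, h.symm⟩

lemma not_II_lt_ceil {x : ℝ} (hx : ¬ II x) : x < (⌈x⌉ : ℝ) :=
  lt_of_le_of_ne (Int.le_ceil x) fun h => hx ⟨⌈x⌉, h⟩

variable {V : Type} [Fintype V] [DecidableEq V]

/-- net flow out of `v`. -/
def net (g : V → V → ℝ) (v : V) : ℝ := ∑ w, g v w - ∑ u, g u v

open Classical in
noncomputable def fracSet (g : V → V → ℝ) : Finset (V × V) :=
  Finset.univ.filter fun e => ¬ II (g e.1 e.2)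

open Classical in
lemma mem_fracSet {g : V → V → ℝ} {e : V × V} :
    e ∈ fracSet g ↔ ¬ II (g e.1 e.2) := by
  simp [fracSet]

/-- single-arc function -/
def single (x y : V) (d : ℝ) : V → V → ℝ := fun a b => if a = x ∧ b = y then d else 0

lemma net_single (x y : V) (d : ℝ) (v : V) :
    net (single x y d) v = (if v = x then d else 0) - (if v = y then d else 0) := by
  unfold net single
  congr 1
  · by_cases h : v = x <;> simp [h]
  · by_cases h : v = y <;> simp [h]

lemma net_add (g p : V → V → ℝ) (v : V) :
    net (fun a b => g a b + p a b) v = net g v + net p v := by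
  unfold net; rw [Finset.sum_add_distrib, Finset.sum_add_distrib]; ring

end StmtSix
set_option linter.unusedSectionVars false

namespace StmtSix
open Finset
variable {V : Type} [Fintype V] [DecidableEq V]

/-- Generic perturbation step. -/
lemma perturb (g p : V → V → ℝ)
    (hb : ∀ u v, (⌊g u v⌋ : ℝ) ≤ g u v + p u v ∧ g u v + p u v ≤ (⌈g u v⌉ : ℝ))
    (hnetp : ∀ v, net p v = 0)
    (he : ∃ e : V × V, ¬ II (g e.1 e.2) ∧ II (g e.1 e.2 + p e.1 e.2))
    (hsupp : ∀ u v, p u v ≠ 0 → ¬ II (g u v)) :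
    ∃ g' : V → V → ℝ, fracSet g' ⊂ fracSet g ∧
      (∀ u v, (⌊g u v⌋ : ℝ) ≤ g' u v ∧ g' u v ≤ (⌈g u v⌉ : ℝ)) ∧
      (∀ v, net g' v = net g v) := by
  classical
  refine ⟨fun a b => g a b + p a b, ?_, hb, fun v => by rw [net_add, hnetp]; ring⟩
  obtain ⟨e, he1, he2⟩ := he
  constructor
  · intro x hx
    rw [mem_fracSet] at hx ⊢
    intro hII
    by_cases hp : p x.1 x.2 = 0
    · rw [hp, add_zero] at hx; exact hx hII
    · exact hsupp _ _ hp hII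
  · intro hsub
    have := hsub (mem_fracSet.mpr he1)
    rw [mem_fracSet] at this
    exact this he2

/-- Case (i): fractional self-loop. -/
lemma step_loop (g : V → V → ℝ) (v₀ : V) (hv : ¬ II (g v₀ v₀)) :
    ∃ g' : V → V → ℝ, fracSet g' ⊂ fracSet g ∧
      (∀ u v, (⌊g u v⌋ : ℝ) ≤ g' u v ∧ g' u v ≤ (⌈g u v⌉ : ℝ)) ∧
      (∀ v, net g' v = net g v) := by
  classical
  set d : ℝ := (⌊g v₀ v₀⌋ : ℝ) - g v₀ v₀ with hd
  refine perturb g (single v₀ v₀ d) ?_ ?_ ⟨(v₀, v₀), hv, ?_⟩ ?_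
  · intro a b
    by_cases h : a = v₀ ∧ b = v₀
    · have e1 : g a b = g v₀ v₀ := by rw [h.1, h.2]
      have e2 : single v₀ v₀ d a b = d := if_pos h
      rw [e2, e1, hd]
      have h1 : (⌊g v₀ v₀⌋ : ℝ) ≤ (⌈g v₀ v₀⌉ : ℝ) := by
        exact_mod_cast Int.floor_le_ceil (g v₀ v₀)
      constructor <;> linarith
    · have e2 : single v₀ v₀ d a b = 0 := if_neg h
      rw [e2, add_zero]
      exact ⟨Int.floor_le _, Int.le_ceil _⟩
  · intro x; rw [net_single]; ring
  · refine ⟨⌊g v₀ v₀⌋, ?_⟩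
    have e2 : single v₀ v₀ d v₀ v₀ = d := if_pos ⟨rfl, rfl⟩
    rw [e2, hd]; ring
  · intro a b hp
    by_cases h : a = v₀ ∧ b = v₀
    · rw [h.1, h.2]; exact hv
    · exact absurd (if_neg h) hp

/-- Case (ii) auxiliary, ordered version: frac part of `g u₀ v₀` is the smaller one. -/
lemma step_pair' (g : V → V → ℝ) (u₀ v₀ : V) (huv : u₀ ≠ v₀)
    (h1 : ¬ II (g u₀ v₀)) (h2 : ¬ II (g v₀ u₀))
    (hle : g u₀ v₀ - ⌊g u₀ v₀⌋ ≤ g v₀ u₀ - ⌊g v₀ u₀⌋) :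
    ∃ g' : V → V → ℝ, fracSet g' ⊂ fracSet g ∧
      (∀ u v, (⌊g u v⌋ : ℝ) ≤ g' u v ∧ g' u v ≤ (⌈g u v⌉ : ℝ)) ∧
      (∀ v, net g' v = net g v) := by
  classical
  set d : ℝ := g u₀ v₀ - ⌊g u₀ v₀⌋ with hd
  have hdpos : 0 < d := by
    have := not_II_floor_lt h1; rw [hd]; linarith
  set p : V → V → ℝ := fun a b => single u₀ v₀ (-d) a b + single v₀ u₀ (-d) a b with hp
  have hAB : ¬ (u₀ = v₀ ∧ v₀ = u₀) := fun h => huv h.1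
  refine perturb g p ?_ ?_ ⟨(u₀, v₀), h1, ?_⟩ ?_
  · intro a b
    by_cases hA : a = u₀ ∧ b = v₀
    · have e1 : g a b = g u₀ v₀ := by rw [hA.1, hA.2]
      have hB : ¬ (a = v₀ ∧ b = u₀) := by
        rintro ⟨h3, _⟩; exact huv (hA.1 ▸ h3)
      have e2 : p a b = -d := by
        show single u₀ v₀ (-d) a b + single v₀ u₀ (-d) a b = -d
        rw [single, single, if_pos hA, if_neg hB]; ring
      rw [e2, e1]
      have h3 : g u₀ v₀ ≤ (⌈g u₀ v₀⌉ : ℝ) := Int.le_ceil _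
      constructor
      · rw [hd] at hdpos ⊢; linarith
      · rw [hd]; linarith
    · by_cases hB : a = v₀ ∧ b = u₀
      · have e1 : g a b = g v₀ u₀ := by rw [hB.1, hB.2]
        have e2 : p a b = -d := by
          show single u₀ v₀ (-d) a b + single v₀ u₀ (-d) a b = -d
          rw [single, single, if_pos hB, if_neg hA]; ring
        rw [e2, e1]
        have h3 : g v₀ u₀ ≤ (⌈g v₀ u₀⌉ : ℝ) := Int.le_ceil _
        constructor
        · linarith
        · linarith
      · have e2 : p a b = 0 := by
          show single u₀ v₀ (-d) a b + single v₀ u₀ (-d) a b = 0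
          rw [single, single, if_neg hA, if_neg hB]; ring
        rw [e2, add_zero]
        exact ⟨Int.floor_le _, Int.le_ceil _⟩
  · intro x
    have : net p x = net (single u₀ v₀ (-d)) x + net (single v₀ u₀ (-d)) x := net_add _ _ x
    rw [this, net_single, net_single]; ring
  · have e2 : p u₀ v₀ = -d := by
      show single u₀ v₀ (-d) u₀ v₀ + single v₀ u₀ (-d) u₀ v₀ = -d
      rw [single, single, if_pos ⟨rfl, rfl⟩, if_neg hAB]; ring
    rw [e2]
    exact ⟨⌊g u₀ v₀⌋, by rw [hd]; ring⟩
  · intro a b hpb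
    by_cases hA : a = u₀ ∧ b = v₀
    · rw [hA.1, hA.2]; exact h1
    · by_cases hB : a = v₀ ∧ b = u₀
      · rw [hB.1, hB.2]; exact h2
      · refine absurd ?_ hpb
        show single u₀ v₀ (-d) a b + single v₀ u₀ (-d) a b = 0
        rw [single, single, if_neg hA, if_neg hB]; ring

/-- Case (ii): both directions of a pair fractional. -/
lemma step_pair (g : V → V → ℝ) (u₀ v₀ : V) (huv : u₀ ≠ v₀)
    (h1 : ¬ II (g u₀ v₀)) (h2 : ¬ II (g v₀ u₀)) :
    ∃ g' : V → V → ℝ, fracSet g' ⊂ fracSet g ∧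
      (∀ u v, (⌊g u v⌋ : ℝ) ≤ g' u v ∧ g' u v ≤ (⌈g u v⌉ : ℝ)) ∧
      (∀ v, net g' v = net g v) := by
  rcases le_total (g u₀ v₀ - ⌊g u₀ v₀⌋) (g v₀ u₀ - ⌊g v₀ u₀⌋) with h | h
  · exact step_pair' g u₀ v₀ huv h1 h2 h
  · exact step_pair' g v₀ u₀ huv.symm h2 h1 h

end StmtSix
namespace StmtSix
open Finset
variable {V : Type} [Fintype V] [DecidableEq V]

lemma net_sum (s : Finset ℕ) (h : ℕ → V → V → ℝ) (x : V) :
    net (fun a b => ∑ k ∈ s, h k a b) x = ∑ k ∈ s, net (h k) x := by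
  unfold net
  rw [Finset.sum_comm (s := Finset.univ) (t := s) (f := fun w k => h k x w),
      Finset.sum_comm (s := Finset.univ) (t := s) (f := fun u k => h k u x),
      ← Finset.sum_sub_distrib]

/-- Local degree lemma. -/
lemma degree_two (g : V → V → ℝ) (hnet : ∀ v, II (net g v))
    (hloop : ∀ v, II (g v v)) (hdouble : ∀ x y, ¬ II (g x y) → II (g y x))
    {x v : V} (h : x ≠ v ∧ (¬ II (g x v) ∨ ¬ II (g v x))) :
    ∃ w, w ≠ x ∧ (v ≠ w ∧ (¬ II (g v w) ∨ ¬ II (g w v))) := by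
  classical
  by_contra hcon
  push_neg at hcon
  have key : ∀ w, w ≠ x → w ≠ v → II (g v w) ∧ II (g w v) := by
    intro w hwx hwv
    exact hcon w hwx (Ne.symm hwv)
  have hsum1 : II (∑ w ∈ Finset.univ.erase x, g v w) := by
    apply II_sum
    intro w hw
    have hwx := Finset.ne_of_mem_erase hw
    by_cases hwv : w = v
    · rw [hwv]; exact hloop v
    · exact (key w hwx hwv).1
  have hsum2 : II (∑ w ∈ Finset.univ.erase x, g w v) := by
    apply II_sum
    intro w hw
    have hwx := Finset.ne_of_mem_erase hw
    by_cases hwv : w = v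
    · rw [hwv]; exact hloop v
    · exact (key w hwx hwv).2
  have e1 : ∑ w, g v w = g v x + ∑ w ∈ Finset.univ.erase x, g v w :=
    (Finset.add_sum_erase _ _ (Finset.mem_univ x)).symm
  have e2 : ∑ w, g w v = g x v + ∑ w ∈ Finset.univ.erase x, g w v :=
    (Finset.add_sum_erase _ _ (Finset.mem_univ x)).symm
  have hnetv := hnet v
  rw [net, e1, e2] at hnetv
  have hdiff : II (g v x - g x v) := by
    have h3 : II ((g v x + ∑ w ∈ Finset.univ.erase x, g v w) -
        (g x v + ∑ w ∈ Finset.univ.erase x, g w v)) := hnetv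
    have h4 := (h3.add hsum2).sub hsum1
    have : (g v x + ∑ w ∈ Finset.univ.erase x, g v w) -
        (g x v + ∑ w ∈ Finset.univ.erase x, g w v) +
        (∑ w ∈ Finset.univ.erase x, g w v) - (∑ w ∈ Finset.univ.erase x, g v w)
        = g v x - g x v := by ring
    rwa [this] at h4
  rcases h.2 with hf | hf
  · have h5 : II (g v x) := hdouble x v hf
    have : II (g v x - (g v x - g x v)) := h5.sub hdiff
    rw [show g v x - (g v x - g x v) = g x v by ring] at this
    exact hf this
  · have h5 : II (g x v) := hdouble v x hf
    have : II ((g v x - g x v) + g x v) := hdiff.add h5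
    rw [show (g v x - g x v) + g x v = g v x by ring] at this
    exact hf this

end StmtSix
namespace StmtSix
open Finset
variable {V : Type} [Fintype V] [DecidableEq V]

lemma step_cycle (g : V → V → ℝ) (hnet : ∀ v, II (net g v))
    (hloop : ∀ v, II (g v v)) (hdouble : ∀ x y, ¬ II (g x y) → II (g y x))
    {a b : V} (hab : ¬ II (g a b)) :
    ∃ g' : V → V → ℝ, fracSet g' ⊂ fracSet g ∧
      (∀ u v, (⌊g u v⌋ : ℝ) ≤ g' u v ∧ g' u v ≤ (⌈g u v⌉ : ℝ)) ∧
      (∀ v, net g' v = net g v) := by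
  classical
  -- adjacency
  set A : V → V → Prop := fun x y => x ≠ y ∧ (¬ II (g x y) ∨ ¬ II (g y x)) with hA
  have hB : ∀ x v, A x v → ∃ w, w ≠ x ∧ A v w := fun x v h =>
    degree_two g hnet hloop hdouble h
  have hab' : a ≠ b := by
    intro h; rw [h] at hab; exact hab (hloop b)
  have hA0 : A a b := ⟨hab', Or.inl hab⟩
  -- the walk
  set W : V → V → V := fun x v => if h : A x v then (hB x v h).choose else x with hW
  have Wspec : ∀ x v, A x v → (W x v ≠ x ∧ A v (W x v)) := by
    intro x v h
    rw [hW]; simp only [dif_pos h]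
    exact (hB x v h).choose_spec
  set q : ℕ → V × V := fun n => Nat.rec (a, b) (fun _ p => (p.2, W p.1 p.2)) n with hq
  set v : ℕ → V := fun n => (q n).1 with hv
  have hv1 : ∀ n, v (n + 1) = (q n).2 := fun n => rfl
  have hv2 : ∀ n, v (n + 2) = W (v n) (v (n + 1)) := fun n => rfl
  have hAseq : ∀ n, A (v n) (v (n + 1)) := by
    intro n
    induction n with
    | zero => exact hA0
    | succ m ih =>
      rw [hv2 m]
      exact (Wspec _ _ ih).2
  have hne2 : ∀ n, v (n + 2) ≠ v n := by
    intro n; rw [hv2 n]; exact (Wspec _ _ (hAseq n)).1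
  -- pigeonhole + first repeat
  obtain ⟨m, n, hmn, hvmn⟩ := Finite.exists_ne_map_eq_of_infinite v
  have hEx : ∃ j, ∃ i, i < j ∧ v i = v j := by
    rcases hmn.lt_or_gt with h | h
    · exact ⟨n, m, h, hvmn⟩
    · exact ⟨m, n, h, hvmn.symm⟩
  set J := Nat.find hEx with hJdef
  obtain ⟨i, hiJ, hviJ⟩ := Nat.find_spec hEx
  rw [← hJdef] at hiJ hviJ
  have distinct : ∀ k l, k < l → l < J → v k ≠ v l := by
    intro k l h1 h2 he
    exact Nat.find_min hEx h2 ⟨k, h1, he⟩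
  set L := J - i with hLdef
  have hJL : J = i + L := by omega
  have hL3 : 3 ≤ L := by
    have h1 : L ≠ 0 := by omega
    have h2 : L ≠ 1 := by
      intro h
      have : J = i + 1 := by omega
      rw [this] at hviJ
      exact (hAseq i).1 hviJ
    have h3 : L ≠ 2 := by
      intro h
      have : J = i + 2 := by omega
      rw [this] at hviJ
      exact hne2 i hviJ.symm
    omega
  set u : ℕ → V := fun k => v (i + k) with hu
  have huL : u L = u 0 := by
    rw [hu]; simp only []
    rw [← hJL, Nat.add_zero]
    exact hviJ.symm
  have huinj : ∀ k l, k < l → l < L → u k ≠ u l := by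
    intro k l h1 h2
    exact distinct (i + k) (i + l) (by omega) (by omega)
  have huA : ∀ k, A (u k) (u (k + 1)) := fun k => hAseq (i + k)
  have huinj' : ∀ k l, k ≤ L → l ≤ L → u k = u l →
      k = l ∨ (k = 0 ∧ l = L) ∨ (k = L ∧ l = 0) := by
    intro k l hk hl he
    rcases eq_or_lt_of_le hk with hkL | hkL <;> rcases eq_or_lt_of_le hl with hlL | hlL
    · left; omega
    · -- k = L, l < L
      rw [hkL, huL] at he
      rcases Nat.eq_zero_or_pos l with h0 | h0
      · right; right; exact ⟨hkL, h0⟩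
      · exact absurd he (huinj 0 l h0 hlL)
    · -- k < L, l = L
      rw [hlL, huL] at he
      rcases Nat.eq_zero_or_pos k with h0 | h0
      · right; left; exact ⟨h0, hlL⟩
      · exact absurd he.symm (huinj 0 k h0 hkL)
    · rcases lt_trichotomy k l with h | h | h
      · exact absurd he (huinj k l h hlL)
      · left; exact h
      · exact absurd he.symm (huinj l k h hkL)
  -- matched pairs lemmas
  have pairs1 : ∀ k l, k < L → l < L → u k = u l → u (k+1) = u (l+1) → k = l := by
    intro k l hk hl h1 _
    rcases huinj' k l (by omega) (by omega) h1 with h | h | h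
    · exact h
    · omega
    · omega
  have pairs2 : ∀ k l, k < L → l < L → u k = u (l+1) → u (k+1) = u l → False := by
    intro k l hk hl h1 h2
    rcases huinj' (k+1) l (by omega) (by omega) h2 with h | h | h
    · -- k + 1 = l
      have h3 : u k = u (k + 2) := by rw [h1, ← h]
      rcases huinj' k (k+2) (by omega) (by omega) h3 with h' | h' | h'
      · omega
      · omega
      · omega
    · omega
    · -- k + 1 = L ∧ l = 0
      have h3 : u k = u 1 := by rw [h1, h.2]
      rcases huinj' k 1 (by omega) (by omega) h3 with h' | h' | h'
      · omega
      · omega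
      · omega
  -- arcs, signs, rooms
  set arc : ℕ → V × V := fun k =>
    if ¬ II (g (u k) (u (k+1))) then (u k, u (k+1)) else (u (k+1), u k) with harc
  set sg : ℕ → ℝ := fun k => if ¬ II (g (u k) (u (k+1))) then 1 else -1 with hsg
  set room : ℕ → ℝ := fun k =>
    if ¬ II (g (u k) (u (k+1))) then (⌈g (u k) (u (k+1))⌉ : ℝ) - g (u k) (u (k+1))
    else g (u (k+1)) (u k) - (⌊g (u (k+1)) (u k)⌋ : ℝ) with hroom
  have fact_frac : ∀ k, ¬ II (g (arc k).1 (arc k).2) := by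
    intro k
    rw [harc]
    by_cases h : ¬ II (g (u k) (u (k+1)))
    · simp only [if_pos h]; exact h
    · simp only [if_neg h]
      rcases (huA k).2 with h' | h'
      · exact absurd h' h
      · exact h'
  have fact_ne : ∀ k, (arc k).1 ≠ (arc k).2 := by
    intro k
    rw [harc]
    by_cases h : ¬ II (g (u k) (u (k+1)))
    · simp only [if_pos h]; exact (huA k).1
    · simp only [if_neg h]; exact (huA k).1.symm
  have fact2 : ∀ k,
      (sg k = 1 ∧ room k = (⌈g (arc k).1 (arc k).2⌉ : ℝ) - g (arc k).1 (arc k).2) ∨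
      (sg k = -1 ∧ room k = g (arc k).1 (arc k).2 - (⌊g (arc k).1 (arc k).2⌋ : ℝ)) := by
    intro k
    rw [harc, hsg, hroom]
    by_cases h : ¬ II (g (u k) (u (k+1)))
    · left; simp only [if_pos h]; exact ⟨by trivial, by trivial⟩
    · right; simp only [if_neg h]; exact ⟨by trivial, by trivial⟩
  have fact_room_pos : ∀ k, 0 < room k := by
    intro k
    rcases fact2 k with ⟨_, hr⟩ | ⟨_, hr⟩
    · rw [hr]; have := not_II_lt_ceil (fact_frac k); linarith
    · rw [hr]; have := not_II_floor_lt (fact_frac k); linarith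
  -- arc injectivity
  have arcinj : ∀ k l, k < L → l < L → arc k = arc l → k = l := by
    intro k l hk hl he
    have hek := congrArg Prod.fst he
    have hek2 := congrArg Prod.snd he
    rw [harc] at hek hek2
    by_cases h1 : ¬ II (g (u k) (u (k+1))) <;> by_cases h2 : ¬ II (g (u l) (u (l+1)))
    · simp only [if_pos h1, if_pos h2] at hek hek2
      exact pairs1 k l hk hl hek hek2
    · simp only [if_pos h1, if_neg h2] at hek hek2
      exact absurd (pairs2 k l hk hl hek hek2) (by simp)
    · simp only [if_neg h1, if_pos h2] at hek hek2
      exact absurd (pairs2 k l hk hl hek2 hek) (by simp)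
    · simp only [if_neg h1, if_neg h2] at hek hek2
      exact pairs1 k l hk hl hek2 hek
  -- epsilon
  have hrng : (Finset.range L).Nonempty := ⟨0, Finset.mem_range.mpr (by omega)⟩
  set ε : ℝ := (Finset.range L).inf' hrng room with hε
  have hεpos : 0 < ε := by
    rw [hε, Finset.lt_inf'_iff]
    intro k _; exact fact_room_pos k
  have hεle : ∀ k, k < L → ε ≤ room k := by
    intro k hk
    exact Finset.inf'_le room (Finset.mem_range.mpr hk)
  obtain ⟨k₀, hk₀mem, hk₀⟩ := Finset.exists_mem_eq_inf' hrng room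
  rw [Finset.mem_range] at hk₀mem
  rw [← hε] at hk₀
  -- the perturbation
  set p : V → V → ℝ := fun x y =>
    ∑ k ∈ Finset.range L, single (arc k).1 (arc k).2 (ε * sg k) x y with hp
  have single_eq : ∀ k x y,
      single (arc k).1 (arc k).2 (ε * sg k) x y =
        if (x, y) = arc k then ε * sg k else 0 := by
    intro k x y
    rw [single]
    congr 1
    rw [Prod.ext_iff]
  have pval0 : ∀ x y, (∀ k, k < L → (x, y) ≠ arc k) → p x y = 0 := by
    intro x y h
    rw [hp]
    apply Finset.sum_eq_zero
    intro k hk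
    rw [single_eq, if_neg (h k (Finset.mem_range.mp hk))]
  have pval1 : ∀ k, k < L → p (arc k).1 (arc k).2 = ε * sg k := by
    intro k hk
    have hpr : p (arc k).1 (arc k).2 =
        ∑ l ∈ Finset.range L, single (arc l).1 (arc l).2 (ε * sg l) (arc k).1 (arc k).2 := rfl
    rw [hpr, Finset.sum_eq_single k]
    · rw [single_eq, if_pos rfl]
    · intro l hl hlk
      rw [single_eq]
      apply if_neg
      intro hc
      exact hlk (arcinj l k (Finset.mem_range.mp hl) hk (by rw [← hc]))
    · intro hc
      exact absurd (Finset.mem_range.mpr hk) hc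
  refine perturb g p ?_ ?_ ⟨arc k₀, fact_frac k₀, ?_⟩ ?_
  · intro x y
    by_cases hex : ∃ k, k < L ∧ (x, y) = arc k
    · obtain ⟨k, hk, hxy⟩ := hex
      have hgx : g x y = g (arc k).1 (arc k).2 := by
        rw [show x = (arc k).1 by rw [← hxy], show y = (arc k).2 by rw [← hxy]]
      have hpx : p x y = ε * sg k := by
        rw [show x = (arc k).1 by rw [← hxy], show y = (arc k).2 by rw [← hxy]]
        exact pval1 k hk
      rw [hgx, hpx]
      have hfl := not_II_floor_lt (fact_frac k)
      have hce := not_II_lt_ceil (fact_frac k)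
      have hrm := hεle k hk
      rcases fact2 k with ⟨hs, hr⟩ | ⟨hs, hr⟩ <;> rw [hs] <;> rw [hr] at hrm
      · constructor <;> [linarith; linarith]
      · constructor <;> [linarith; linarith]
    · push_neg at hex
      rw [pval0 x y hex, add_zero]
      exact ⟨Int.floor_le _, Int.le_ceil _⟩
  · -- net p = 0
    intro x
    rw [hp, net_sum]
    have term : ∀ k, net (single (arc k).1 (arc k).2 (ε * sg k)) x =
        ε * ((if x = u k then (1:ℝ) else 0) - (if x = u (k+1) then (1:ℝ) else 0)) := by
      intro k
      rw [net_single]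
      rcases fact2 k with ⟨hs, _⟩ | ⟨hs, _⟩ <;> rw [hs]
      · -- sg = 1 : arc k = (u k, u (k+1))
        have : arc k = (u k, u (k+1)) := by
          rw [harc]
          by_cases h : ¬ II (g (u k) (u (k+1)))
          · simp only [if_pos h]
          · exfalso
            rw [hsg] at hs
            simp only [if_neg h] at hs
            norm_num at hs
        rw [this]
        split_ifs <;> ring
      · have : arc k = (u (k+1), u k) := by
          rw [harc]
          by_cases h : ¬ II (g (u k) (u (k+1)))
          · exfalso
            rw [hsg] at hs
            simp only [if_pos h] at hs
            norm_num at hs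
          · simp only [if_neg h]
        rw [this]
        split_ifs <;> ring
    calc ∑ k ∈ Finset.range L, net (single (arc k).1 (arc k).2 (ε * sg k)) x
        = ∑ k ∈ Finset.range L,
            ε * ((if x = u k then (1:ℝ) else 0) - (if x = u (k+1) then (1:ℝ) else 0)) := by
          exact Finset.sum_congr rfl fun k _ => term k
      _ = ε * ∑ k ∈ Finset.range L,
            ((if x = u k then (1:ℝ) else 0) - (if x = u (k+1) then (1:ℝ) else 0)) := by
          rw [Finset.mul_sum]
      _ = ε * ((if x = u 0 then (1:ℝ) else 0) - (if x = u L then (1:ℝ) else 0)) := by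
          rw [Finset.sum_range_sub' (fun k => if x = u k then (1:ℝ) else 0)]
      _ = 0 := by rw [huL]; ring
  · -- integrality achieved at k₀
    rw [pval1 k₀ hk₀mem]
    have hfl := not_II_floor_lt (fact_frac k₀)
    rcases fact2 k₀ with ⟨hs, hr⟩ | ⟨hs, hr⟩ <;> rw [hs]
    · refine ⟨⌈g (arc k₀).1 (arc k₀).2⌉, ?_⟩
      rw [hk₀, hr]; ring
    · refine ⟨⌊g (arc k₀).1 (arc k₀).2⌋, ?_⟩
      rw [hk₀, hr]; ring
  · -- support
    intro x y hpxy
    by_cases hex : ∃ k, k < L ∧ (x, y) = arc k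
    · obtain ⟨k, _, hxy⟩ := hex
      rw [show x = (arc k).1 by rw [← hxy], show y = (arc k).2 by rw [← hxy]]
      exact fact_frac k
    · push_neg at hex
      exact absurd (pval0 x y hex) hpxy

end StmtSix
namespace StmtSix
open Finset
variable {V : Type} [Fintype V] [DecidableEq V]

lemma step (g : V → V → ℝ) (hnet : ∀ v, II (net g v)) (h0 : (fracSet g).Nonempty) :
    ∃ g' : V → V → ℝ, fracSet g' ⊂ fracSet g ∧
      (∀ u v, (⌊g u v⌋ : ℝ) ≤ g' u v ∧ g' u v ≤ (⌈g u v⌉ : ℝ)) ∧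
      (∀ v, net g' v = net g v) := by
  classical
  by_cases hl : ∃ v, ¬ II (g v v)
  · obtain ⟨v, hv⟩ := hl
    exact step_loop g v hv
  · push_neg at hl
    by_cases hd : ∃ x y, ¬ II (g x y) ∧ ¬ II (g y x)
    · obtain ⟨x, y, h1, h2⟩ := hd
      have hxy : x ≠ y := by
        intro h; rw [h] at h1; exact h1 (hl y)
      exact step_pair g x y hxy h1 h2
    · push_neg at hd
      obtain ⟨e, he⟩ := h0
      rw [mem_fracSet] at he
      exact step_cycle g hnet hl (fun x y hx => hd x y hx) he

lemma round_flow : ∀ (N : ℕ) (g : V → V → ℝ), (fracSet g).card ≤ N →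
    (∀ v, II (net g v)) →
    ∃ g' : V → V → ℝ, (∀ u v, II (g' u v)) ∧
      (∀ u v, (⌊g u v⌋ : ℝ) ≤ g' u v ∧ g' u v ≤ (⌈g u v⌉ : ℝ)) ∧
      (∀ v, net g' v = net g v) := by
  intro N
  induction N with
  | zero =>
    intro g hcard hnet
    refine ⟨g, ?_, fun u v => ⟨Int.floor_le _, Int.le_ceil _⟩, fun v => rfl⟩
    intro u v
    by_contra h
    have : (u, v) ∈ fracSet g := mem_fracSet.mpr h
    have := Finset.card_pos.mpr ⟨(u, v), this⟩
    omega
  | succ N ih =>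
    intro g hcard hnet
    rcases Finset.eq_empty_or_nonempty (fracSet g) with hemp | hne
    · refine ⟨g, ?_, fun u v => ⟨Int.floor_le _, Int.le_ceil _⟩, fun v => rfl⟩
      intro u v
      by_contra h
      exact absurd hemp (Finset.nonempty_iff_ne_empty.mp ⟨(u, v), mem_fracSet.mpr h⟩)
    · obtain ⟨g₁, hsub, hbd, hnet1⟩ := step g hnet hne
      have hcard1 : (fracSet g₁).card ≤ N := by
        have := Finset.card_lt_card hsub
        omega
      have hnet1' : ∀ v, II (net g₁ v) := fun v => (hnet1 v).symm ▸ hnet v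
      obtain ⟨g', hint, hbd', hnet'⟩ := ih g₁ hcard1 hnet1'
      refine ⟨g', hint, ?_, fun v => (hnet' v).trans (hnet1 v)⟩
      intro u v
      constructor
      · calc (⌊g u v⌋ : ℝ) ≤ (⌊g₁ u v⌋ : ℝ) := by
              exact_mod_cast Int.le_floor.mpr (hbd u v).1
          _ ≤ g' u v := (hbd' u v).1
      · calc g' u v ≤ (⌈g₁ u v⌉ : ℝ) := (hbd' u v).2
          _ ≤ (⌈g u v⌉ : ℝ) := by
              exact_mod_cast Int.ceil_le.mpr (hbd u v).2

end StmtSix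

/-- Let `G°` be a flow network with integer arc capacities and no vertex capacities, with
source `s` and sink `t`, and let `f` be a (possibly fractional) feasible flow in `G°` whose
value is an integer. Then there exists an integer-valued feasible flow `f₁` in `G°` of the
same value with `|f(e) - f₁(e)| < 1` on every arc `e`. -/
theorem stmt_6 {V : Type} [Fintype V] [DecidableEq V]
    (c : V → V → ℤ) (s t : V) (hst : s ≠ t)
    (f : V → V → ℝ)
    (hf0 : ∀ u v, 0 ≤ f u v) (hfc : ∀ u v, f u v ≤ (c u v : ℝ))
    (hcons : ∀ v, v ≠ s → v ≠ t → ∑ u, f u v = ∑ w, f v w)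
    (hval : ∃ z : ℤ, ∑ w, f s w - ∑ u, f u s = (z : ℝ)) :
    ∃ f₁ : V → V → ℤ,
      (∀ u v, 0 ≤ f₁ u v) ∧ (∀ u v, f₁ u v ≤ c u v) ∧
      (∀ v, v ≠ s → v ≠ t → ∑ u, ((f₁ u v : ℤ) : ℝ) = ∑ w, ((f₁ v w : ℤ) : ℝ)) ∧
      (∑ w, ((f₁ s w : ℤ) : ℝ) - ∑ u, ((f₁ u s : ℤ) : ℝ) = ∑ w, f s w - ∑ u, f u s) ∧
      (∀ u v, |f u v - ((f₁ u v : ℤ) : ℝ)| < 1) := by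
  classical
  open StmtSix in
  have hnet0 : ∀ v, v ≠ s → v ≠ t → net f v = 0 := by
    intro v hvs hvt
    rw [net, sub_eq_zero]
    exact (hcons v hvs hvt).symm
  have hnets : II (net f s) := hval
  have htotal : ∑ v, net f v = 0 := by
    unfold net
    rw [Finset.sum_sub_distrib]
    rw [Finset.sum_comm (f := fun v w => f v w)]
    ring
  have hsplit : ∑ v, net f v = net f s + (net f t +
      ∑ v ∈ (Finset.univ.erase s).erase t, net f v) := by
    rw [Finset.add_sum_erase _ _ (Finset.mem_erase.mpr ⟨Ne.symm hst, Finset.mem_univ t⟩)]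
    rw [Finset.add_sum_erase _ _ (Finset.mem_univ s)]
  have hrest : ∑ v ∈ (Finset.univ.erase s).erase t, net f v = 0 := by
    apply Finset.sum_eq_zero
    intro v hv
    have hvt := Finset.ne_of_mem_erase hv
    have hvs := Finset.ne_of_mem_erase (Finset.mem_of_mem_erase hv)
    exact hnet0 v hvs hvt
  have hnett : II (net f t) := by
    have : net f t = 0 - net f s := by
      rw [← htotal, hsplit, hrest]; ring
    rw [this]
    exact II_zero.sub hnets
  have hnet : ∀ v, II (net f v) := by
    intro v
    by_cases hvs : v = s
    · rw [hvs]; exact hnets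
    · by_cases hvt : v = t
      · rw [hvt]; exact hnett
      · rw [hnet0 v hvs hvt]; exact II_zero
  obtain ⟨g', hint, hbd, hnet'⟩ :=
    round_flow (fracSet f).card f le_rfl hnet
  refine ⟨fun u v => ⌊g' u v⌋, ?_, ?_, ?_, ?_, ?_⟩
  all_goals
    have hcast : ∀ u v, ((⌊g' u v⌋ : ℤ) : ℝ) = g' u v := fun u v => (hint u v).floor_eq
  · intro u v
    apply Int.le_floor.mpr
    calc ((0 : ℤ) : ℝ) ≤ (⌊f u v⌋ : ℝ) := by
          exact_mod_cast Int.floor_nonneg.mpr (hf0 u v)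
      _ ≤ g' u v := (hbd u v).1
  · intro u v
    have h1 : g' u v ≤ ((c u v : ℤ) : ℝ) := by
      calc g' u v ≤ (⌈f u v⌉ : ℝ) := (hbd u v).2
        _ ≤ ((c u v : ℤ) : ℝ) := by exact_mod_cast Int.ceil_le.mpr (hfc u v)
    have := (hcast u v).symm ▸ h1
    exact_mod_cast this
  · intro v hvs hvt
    have h1 : ∑ u, ((⌊g' u v⌋ : ℤ) : ℝ) = ∑ u, g' u v :=
      Finset.sum_congr rfl fun u _ => hcast u v
    have h2 : ∑ w, ((⌊g' v w⌋ : ℤ) : ℝ) = ∑ w, g' v w :=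
      Finset.sum_congr rfl fun w _ => hcast v w
    rw [h1, h2]
    have h3 : net g' v = 0 := by rw [hnet' v]; exact hnet0 v hvs hvt
    rw [net] at h3
    linarith
  · have h1 : ∑ w, ((⌊g' s w⌋ : ℤ) : ℝ) = ∑ w, g' s w :=
      Finset.sum_congr rfl fun w _ => hcast s w
    have h2 : ∑ u, ((⌊g' u s⌋ : ℤ) : ℝ) = ∑ u, g' u s :=
      Finset.sum_congr rfl fun u _ => hcast u s
    rw [h1, h2]
    exact hnet' s
  · intro u v
    rw [hcast u v]
    have hb1 := (hbd u v).1
    have hb2 := (hbd u v).2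
    by_cases hII : II (f u v)
    · have e1 : (⌊f u v⌋ : ℝ) = f u v := hII.floor_eq
      have e2 : (⌈f u v⌉ : ℝ) = f u v := hII.ceil_eq
      have : g' u v = f u v := le_antisymm (e2 ▸ hb2) (e1 ▸ hb1)
      rw [this]
      simp
    · have e1 : (⌊f u v⌋ : ℝ) < f u v := not_II_floor_lt hII
      have e2 : f u v < (⌈f u v⌉ : ℝ) := not_II_lt_ceil hII
      have e3 : (⌈f u v⌉ : ℝ) ≤ (⌊f u v⌋ : ℝ) + 1 := by
        exact_mod_cast Int.ceil_le_floor_add_one (f u v)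
      rw [abs_lt]
      constructor <;> linarith
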